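/- If strictly more than half of the leaves of a 1-fault NAND tree of depth n have value 0, then the root has value 0 if n is even and value 1 if n is odd. -/

import Mathlib

/-- A complete binary NAND tree of depth `n`: leaves hold bits, each internal
node's value is the NAND of its children's values. -/
inductive NandTree : ℕ → Type where
  | leaf : Bool → NandTree 0
  | node {n : ℕ} : NandTree n → NandTree n → NandTree (n + 1)

/-- The value of (the root of) a NAND tree. -/
def NandTree.val : ∀ {n : ℕ}, NandTree n → Bool
  | _, .leaf b => b
  | _, .node l r => !(l.val && r.val)

/-- The list of leaf values, in left-to-right order. -/
def NandTree.leaves : ∀ {n : ℕ}, NandTree n → List Bool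
  | _, .leaf b => [b]
  | _, .node l r => l.leaves ++ r.leaves

/-- The tree contains no fault nodes: every internal node's two children
have equal values. -/
def NandTree.noFault : ∀ {n : ℕ}, NandTree n → Prop
  | _, .leaf _ => True
  | _, .node l r => l.val = r.val ∧ l.noFault ∧ r.noFault

/-- The quantity κ: 0 at leaves; at a trivial node, the max of the children's κ;
at a fault node, 1 plus the κ of the 0-valued child. -/
def NandTree.kappa : ∀ {n : ℕ}, NandTree n → ℕ
  | _, .leaf _ => 0
  | _, .node l r =>
      if l.val = r.val then max l.kappa r.kappa
      else if l.val = false then 1 + l.kappa else 1 + r.kappa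

/-- The 1-fault condition: κ(v) ≤ 1 at every node of the tree. -/
def NandTree.oneFault : ∀ {n : ℕ}, NandTree n → Prop
  | _, .leaf _ => True
  | _, .node l r => (NandTree.node l r).kappa ≤ 1 ∧ l.oneFault ∧ r.oneFault

lemma parity_succ (n : ℕ) : decide ((n+1) % 2 = 1) = !decide (n % 2 = 1) := by
  rcases Nat.mod_two_eq_zero_or_one n with h | h <;> simp [Nat.add_mod, h]

lemma NandTree.leaves_length : ∀ {n : ℕ} (t : NandTree n), t.leaves.length = 2 ^ n
  | _, .leaf b => by simp [NandTree.leaves]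
  | _, .node l r => by
      simp [NandTree.leaves, NandTree.leaves_length l, NandTree.leaves_length r, pow_succ]
      ring

lemma NandTree.kappa_zero_noFault : ∀ {n : ℕ} (t : NandTree n),
    t.kappa = 0 → t.noFault
  | _, .leaf _ => fun _ => trivial
  | _, .node l r => by
      intro h
      by_cases hv : l.val = r.val
      · simp [NandTree.kappa, hv] at h
        exact ⟨hv, NandTree.kappa_zero_noFault l h.1, NandTree.kappa_zero_noFault r h.2⟩
      · simp only [NandTree.kappa, if_neg hv] at h
        split at h <;> omega

lemma NandTree.noFault_leaves : ∀ {n : ℕ} (t : NandTree n), t.noFault →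
    t.leaves = List.replicate (2 ^ n) (xor t.val (decide (n % 2 = 1)))
  | _, .leaf b => by intro _; simp [NandTree.leaves, NandTree.val]
  | n + 1, .node l r => by
      rintro ⟨hv, hl, hr⟩
      rw [NandTree.leaves, NandTree.noFault_leaves l hl, NandTree.noFault_leaves r hr,
        hv, parity_succ]
      have : xor (NandTree.val (.node l r)) (!decide (n % 2 = 1))
          = xor r.val (decide (n % 2 = 1)) := by
        simp only [NandTree.val, hv]
        cases r.val <;> cases (decide (n % 2 = 1)) <;> rfl
      rw [this, ← List.replicate_add]
      congr 1
      rw [pow_succ]; ring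

lemma NandTree.key : ∀ {n : ℕ} (t : NandTree n), t.oneFault →
    t.val = !decide (n % 2 = 1) → 2 * t.leaves.count false ≤ 2 ^ n
  | _, .leaf b => by
      intro _ hb
      simp [NandTree.val] at hb
      simp [NandTree.leaves, hb]
  | n + 1, .node l r => by
      rintro ⟨hk, hl, hr⟩ hbad
      rw [NandTree.leaves, List.count_append]
      rw [NandTree.val, parity_succ] at hbad
      by_cases hv : l.val = r.val
      · -- trivial node
        rw [NandTree.kappa, if_pos hv] at hk
        have hlv : l.val = !decide (n % 2 = 1) := by
          rw [hv] at hbad ⊢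
          cases hrv : r.val <;> cases hg : decide (n % 2 = 1) <;> simp_all
        have hrv : r.val = !decide (n % 2 = 1) := hv ▸ hlv
        have B1 := NandTree.key l hl hlv
        have B2 := NandTree.key r hr hrv
        rw [pow_succ]; omega
      · -- fault node
        have hand : (l.val && r.val) = false := by
          cases hle : l.val <;> cases hre : r.val <;> simp_all
        rw [hand] at hbad
        have hgn : decide (n % 2 = 1) = true := by
          cases hd : decide (n % 2 = 1) <;> simp [hd] at hbad ⊢
        have count_zero : ∀ {m : ℕ} (s : NandTree m), s.noFault → s.val = false →
            decide (m % 2 = 1) = true → s.leaves.count false = 0 := by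
          intro m s hs hsv hm
          rw [NandTree.noFault_leaves s hs, hsv, hm]
          simp [List.count_replicate]
        have hcl : (l.leaves.count false) ≤ 2 ^ n :=
          le_trans List.count_le_length (le_of_eq (NandTree.leaves_length l))
        have hcr : (r.leaves.count false) ≤ 2 ^ n :=
          le_trans List.count_le_length (le_of_eq (NandTree.leaves_length r))
        rw [NandTree.kappa, if_neg hv] at hk
        by_cases hle : l.val = false
        · rw [if_pos hle] at hk
          have hκ : l.kappa = 0 := by omega
          have h0 : l.leaves.count false = 0 :=
            count_zero l (NandTree.kappa_zero_noFault l hκ) hle hgn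
          rw [h0, pow_succ]; omega
        · rw [if_neg hle] at hk
          have hκ : r.kappa = 0 := by omega
          have hre : r.val = false := by
            cases hv' : r.val
            · rfl
            · cases hl' : l.val <;> simp_all
          have h0 : r.leaves.count false = 0 :=
            count_zero r (NandTree.kappa_zero_noFault r hκ) hre hgn
          rw [h0, pow_succ]; omega

/-- If strictly more than half of the leaves of a 1-fault NAND tree of
depth n have value 0, the root has value 0 for even n and 1 for odd n. -/
theorem oneFault_majority_false {n : ℕ} (t : NandTree n) (h1 : t.oneFault)
    (hmaj : 2 ^ n < 2 * t.leaves.count false) :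
    t.val = decide (n % 2 = 1) := by
  by_contra h
  have hbad : t.val = !decide (n % 2 = 1) := by
    cases hv : t.val <;> cases hd : decide (n % 2 = 1) <;> simp_all
  have := NandTree.key t h1 hbad
  omega
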